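/- Let Ŝ_M : H → ℝ^M be a bounded operator, D an invertible diagonal M×M matrix, K_MM = M Ŝ_M Ŝ_M*, and Q, T, A as in the generalized preconditioner (D K_MM D = Q T^⊤ T Q^⊤, Q^⊤Q = I, A^⊤A = (1/M) T T^⊤ + λ I with λ > 0). Define B = (1/√n) D Q T^{-1} A^{-1} and V = √(nM) Ŝ_M* B A. Then V*V = I_q and V V* Ŝ_M* = Ŝ_M*, i.e., V is a partial isometry whose range projection fixes the range of Ŝ_M*. -/

import Mathlib

open ContinuousLinearMap

section aux

variable {H E F : Type*} [NormedAddCommGroup H] [InnerProductSpace ℝ H] [CompleteSpace H]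
  [NormedAddCommGroup E] [InnerProductSpace ℝ E] [CompleteSpace E]
  [NormedAddCommGroup F] [InnerProductSpace ℝ F] [CompleteSpace F]

lemma falkon_adj_smul (c : ℝ) (f : E →L[ℝ] F) : adjoint (c • f) = c • adjoint f := by
  refine ContinuousLinearMap.ext fun x => ?_
  apply ext_inner_right ℝ
  intro v
  rw [adjoint_inner_left]
  simp [real_inner_smul_left, real_inner_smul_right, adjoint_inner_left]

lemma falkon_range_aux [FiniteDimensional ℝ E] (SM : H →L[ℝ] E) (h : H) :
    ∃ w : E, SM ((adjoint SM) w) = SM h := by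
  classical
  set G : E →L[ℝ] E := SM ∘L adjoint SM with hG
  set K : Submodule ℝ E := LinearMap.range (G : E →ₗ[ℝ] E) with hK
  obtain ⟨u, hu, v, hv, huv⟩ := K.exists_add_mem_mem_orthogonal (SM h)
  have hGvK : G v ∈ K := ⟨v, rfl⟩
  have h0 : inner ℝ (G v) v = (0 : ℝ) := hv (G v) hGvK
  have hSMv : adjoint SM v = 0 := by
    have h1 : inner ℝ (adjoint SM v) (adjoint SM v) = (0 : ℝ) := by
      rw [← h0, hG]
      simp only [comp_apply]
      rw [adjoint_inner_right]
    exact inner_self_eq_zero.mp h1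
  have hvz : v = 0 := by
    have h2 : inner ℝ (SM h) v = (0 : ℝ) := by
      rw [← adjoint_inner_right, hSMv, inner_zero_right]
    have h3 : inner ℝ u v = (0 : ℝ) := hv u hu
    have h4 : inner ℝ v v = (0 : ℝ) := by
      have := congrArg (fun z => inner ℝ z v : E → ℝ) huv
      simp only [inner_add_left] at this
      rw [h2, h3] at this
      linarith
    exact inner_self_eq_zero.mp h4
  obtain ⟨w, hw⟩ := hu
  exact ⟨w, by rw [huv, hvz, add_zero]; exact hw⟩

end aux

set_option maxHeartbeats 1600000 in
/-- Generalized FALKON preconditioner: with `K_MM = M Ŝ_M Ŝ_M*`,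
`D K_MM D = Q Tᵀ T Qᵀ`, `QᵀQ = I`, `AᵀA = (1/M) T Tᵀ + λ I`,
`B = (1/√n) D Q T⁻¹ A⁻¹` and `V = √(nM) Ŝ_M* B A`, the operator `V` is a
partial isometry with `V*V = I` whose range projection fixes the range of
`Ŝ_M*`: `V V* Ŝ_M* = Ŝ_M*`. -/
theorem stmt11 {H : Type*} [NormedAddCommGroup H] [InnerProductSpace ℝ H]
    [CompleteSpace H] [TopologicalSpace.SeparableSpace H] {n M q : ℕ}
    (hn : 0 < n) (hM : 0 < M) (lam : ℝ) (hlam : 0 < lam)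
    (SM : H →L[ℝ] EuclideanSpace ℝ (Fin M))
    (D Dinv : EuclideanSpace ℝ (Fin M) →L[ℝ] EuclideanSpace ℝ (Fin M))
    (hDpos : D.IsPositive) (hD1 : D ∘L Dinv = 1) (hD2 : Dinv ∘L D = 1)
    (Q : EuclideanSpace ℝ (Fin q) →L[ℝ] EuclideanSpace ℝ (Fin M))
    (hQ : adjoint Q ∘L Q = 1)
    (T Tinv A Ainv : EuclideanSpace ℝ (Fin q) →L[ℝ] EuclideanSpace ℝ (Fin q))
    (hT1 : T ∘L Tinv = 1) (hT2 : Tinv ∘L T = 1)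
    (hA1 : A ∘L Ainv = 1) (hA2 : Ainv ∘L A = 1)
    (KMM : EuclideanSpace ℝ (Fin M) →L[ℝ] EuclideanSpace ℝ (Fin M))
    (hKMM : KMM = (M : ℝ) • (SM ∘L adjoint SM))
    (hfact : D ∘L KMM ∘L D = Q ∘L (adjoint T ∘L T) ∘L adjoint Q)
    (hrange : LinearMap.range ((Q ∘L adjoint Q :
        EuclideanSpace ℝ (Fin M) →L[ℝ] EuclideanSpace ℝ (Fin M)) :
        EuclideanSpace ℝ (Fin M) →ₗ[ℝ] EuclideanSpace ℝ (Fin M)) =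
      LinearMap.range ((D ∘L KMM ∘L D :
        EuclideanSpace ℝ (Fin M) →L[ℝ] EuclideanSpace ℝ (Fin M)) :
        EuclideanSpace ℝ (Fin M) →ₗ[ℝ] EuclideanSpace ℝ (Fin M)))
    (hAfact : adjoint A ∘L A = (M : ℝ)⁻¹ • (T ∘L adjoint T) + lam • 1)
    (B : EuclideanSpace ℝ (Fin q) →L[ℝ] EuclideanSpace ℝ (Fin M))
    (hB : B = (Real.sqrt n)⁻¹ • (D ∘L Q ∘L Tinv ∘L Ainv))
    (V : EuclideanSpace ℝ (Fin q) →L[ℝ] H)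
    (hV : V = Real.sqrt (n * M) • (adjoint SM ∘L B ∘L A)) :
    adjoint V ∘L V = 1 ∧ V ∘L adjoint V ∘L adjoint SM = adjoint SM := by
  have hMR : (0:ℝ) < M := by exact_mod_cast hM
  have hnR : (0:ℝ) < n := by exact_mod_cast hn
  have hsn : Real.sqrt n ≠ 0 := ne_of_gt (Real.sqrt_pos.mpr hnR)
  have hDadj : adjoint D = D := hDpos.isSelfAdjoint.adjoint_eq
  -- pointwise inverse facts
  have hAinvA : ∀ x, Ainv (A x) = x := fun x => by
    have := DFunLike.congr_fun hA2 x; simpa using this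
  have hTTinv : ∀ x, T (Tinv x) = x := fun x => by
    have := DFunLike.congr_fun hT1 x; simpa using this
  have hTinvT : ∀ x, Tinv (T x) = x := fun x => by
    have := DFunLike.congr_fun hT2 x; simpa using this
  have hQQ : ∀ x, adjoint Q (Q x) = x := fun x => by
    have := DFunLike.congr_fun hQ x; simpa using this
  have hDDinv : ∀ x, D (Dinv x) = x := fun x => by
    have := DFunLike.congr_fun hD1 x; simpa using this
  have hTadj : ∀ z, adjoint Tinv (adjoint T z) = z := by
    intro z
    have h' : adjoint Tinv ∘L adjoint T = 1 := by
      rw [← adjoint_comp, hT1, ← star_eq_adjoint, star_one]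
    have := DFunLike.congr_fun h' z; simpa using this
  have hKMMy : ∀ y, KMM y = (M:ℝ) • SM (adjoint SM y) := fun y => by
    rw [hKMM]; simp
  -- simplified form of V
  have hVW : V = Real.sqrt M • (adjoint SM ∘L (D ∘L (Q ∘L Tinv))) := by
    rw [hV, hB]
    refine ContinuousLinearMap.ext fun x => ?_
    simp only [smul_apply, comp_apply, coe_smul', Pi.smul_apply]
    rw [hAinvA, map_smul, smul_smul]
    congr 1
    rw [Real.sqrt_mul (le_of_lt hnR)]
    field_simp
  have hVadj : adjoint V = Real.sqrt M • (adjoint Tinv ∘L (adjoint Q ∘L (D ∘L SM))) := by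
    rw [hVW, falkon_adj_smul]
    congr 1
    simp only [adjoint_comp, adjoint_adjoint, hDadj, comp_assoc]
  -- key pointwise identities from the factorization
  have e1 : ∀ z, (M:ℝ) • D (SM (adjoint SM (D z))) = Q (adjoint T (T (adjoint Q z))) := by
    intro z
    have h' := DFunLike.congr_fun hfact z
    simp only [comp_apply] at h'
    rw [hKMMy, map_smul] at h'
    exact h'
  have e2 : ∀ y, adjoint Q (D (KMM y)) = adjoint T (T (adjoint Q (Dinv y))) := by
    intro y
    have h' := DFunLike.congr_fun hfact (Dinv y)
    simp only [comp_apply, hDDinv] at h'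
    rw [h', hQQ]
  -- the projection Q Q* fixes D (SM h)
  have fix : ∀ h : H, Q (adjoint Q (D (SM h))) = D (SM h) := by
    intro h
    have hmem : D (SM h) ∈ LinearMap.range ((Q ∘L adjoint Q :
        EuclideanSpace ℝ (Fin M) →L[ℝ] EuclideanSpace ℝ (Fin M)) :
        EuclideanSpace ℝ (Fin M) →ₗ[ℝ] EuclideanSpace ℝ (Fin M)) := by
      rw [hrange]
      obtain ⟨w, hw⟩ := falkon_range_aux SM h
      refine ⟨Dinv ((M:ℝ)⁻¹ • w), ?_⟩
      show D (KMM (D (Dinv ((M:ℝ)⁻¹ • w)))) = D (SM h)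
      rw [hDDinv, hKMMy]
      simp only [map_smul, smul_smul]
      rw [mul_inv_cancel₀ (ne_of_gt hMR), one_smul, hw]
    obtain ⟨z, hz⟩ := hmem
    have hz' : Q (adjoint Q z) = D (SM h) := hz
    calc Q (adjoint Q (D (SM h))) = Q (adjoint Q (Q (adjoint Q z))) := by rw [hz']
      _ = Q (adjoint Q z) := by rw [hQQ]
      _ = D (SM h) := hz'
  -- SM* ∘ D ∘ Q Q* = SM* ∘ D
  have key : ∀ w, adjoint SM (D (Q (adjoint Q w))) = adjoint SM (D w) := by
    intro w
    apply ext_inner_right ℝ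
    intro h
    rw [adjoint_inner_left, adjoint_inner_left, ← hDadj, adjoint_inner_left,
      adjoint_inner_left, ← adjoint_inner_right Q, adjoint_inner_left, fix]
  constructor
  · rw [hVadj, hVW, smul_comp, comp_smul, smul_smul,
      Real.mul_self_sqrt (Nat.cast_nonneg M)]
    refine ContinuousLinearMap.ext fun x => ?_
    simp only [smul_apply, comp_apply, one_apply]
    rw [← map_smul, ← map_smul, e1, hQQ, hQQ, hTTinv, hTadj]
    rfl
  · rw [hVadj, hVW]
    refine ContinuousLinearMap.ext fun y => ?_
    simp only [comp_apply, smul_apply, map_smul, smul_smul,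
      Real.mul_self_sqrt (Nat.cast_nonneg M)]
    rw [← map_smul, ← map_smul, ← map_smul, ← map_smul, ← map_smul, ← map_smul,
      ← map_smul, ← hKMMy, e2, hTadj, hTinvT, key, hDDinv]
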